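/- Let r ≥ 2 and n ≥ 1 be integers with (r-1)n ≥ 3, let p ∈ {0, 1, ..., r-1}, and set t = r(r-1)n - 2r - (1-p)(r-1), D = (r-1)(rn+p-1), and μ = D(D-1)···(D-t+1) (the falling factorial of D of length t, which is a positive integer). Define ψ₂ = -((D-r)(D-r-1)···(D-r-t+1)/μ)·C_r(rn+p-2, 1) and υ₂ = (t!/μ)·C_r(rn+p-3, 2). Then every complex root x of the t-th derivative R_{rn+p}^{(t)} satisfies (x^r)^2 - ψ₂·x^r + υ₂ = 0; in particular x^r = (ψ₂ + √(ψ₂² - 4υ₂))/2 or x^r = (ψ₂ - √(ψ₂² - 4υ₂))/2. -/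

import Mathlib

noncomputable def RBon (r : ℕ) : ℕ → Polynomial ℂ
  | 0 => 0
  | 1 => 1
  | n + 2 => ∑ i ∈ (Finset.range r).attach,
      Polynomial.X ^ (i : ℕ) * RBon r (n + 2 - (r - (i : ℕ)))
  decreasing_by
    have h := i.2
    rw [Finset.mem_range] at h
    omega

noncomputable def rnomial (r n j : ℕ) : ℕ :=
  ((∑ i ∈ Finset.range r, (Polynomial.X : Polynomial ℕ) ^ i) ^ n).coeff j

open Polynomial Finset

private lemma RBon_rec (r n : ℕ) :
    RBon r (n + 2) = ∑ i ∈ Finset.range r, Polynomial.X ^ i * RBon r (n + 2 - (r - i)) := by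
  rw [RBon.eq_3]
  exact Finset.sum_attach (Finset.range r) (fun i => Polynomial.X ^ i * RBon r (n + 2 - (r - i)))

private lemma rnomial_zero_left (r j : ℕ) : rnomial r 0 j = if j = 0 then 1 else 0 := by
  simp [rnomial, Polynomial.coeff_one]

private lemma rnomial_zero_right (r N : ℕ) (hr : 1 ≤ r) : rnomial r N 0 = 1 := by
  induction N with
  | zero => simp [rnomial]
  | succ N ih =>
    unfold rnomial at *
    rw [pow_succ, Polynomial.mul_coeff_zero, ih]
    have : (∑ i ∈ Finset.range r, (Polynomial.X : Polynomial ℕ) ^ i).coeff 0 = 1 := by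
      rw [Polynomial.finset_sum_coeff]
      simp only [Polynomial.coeff_X_pow]
      rw [Finset.sum_ite_eq (Finset.range r) 0 (fun _ => 1)]
      simp only [Finset.mem_range]
      rw [if_pos (by omega)]
    rw [this, one_mul]

private lemma rnomial_rec (r N j : ℕ) :
    rnomial r (N + 1) j = ∑ k ∈ Finset.range r, if k ≤ j then rnomial r N (j - k) else 0 := by
  unfold rnomial
  rw [pow_succ, _root_.mul_comm, Finset.sum_mul, Polynomial.finset_sum_coeff]
  apply Finset.sum_congr rfl
  intro k _
  rw [Polynomial.coeff_X_pow_mul']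

private lemma rnomial_eq_zero (r N j : ℕ) (h : (r - 1) * N < j) : rnomial r N j = 0 := by
  unfold rnomial
  apply Polynomial.coeff_eq_zero_of_natDegree_lt
  calc ((∑ i ∈ Finset.range r, (Polynomial.X : Polynomial ℕ) ^ i) ^ N).natDegree
      ≤ N * (∑ i ∈ Finset.range r, (Polynomial.X : Polynomial ℕ) ^ i).natDegree :=
        Polynomial.natDegree_pow_le
    _ ≤ N * (r - 1) := by
        apply Nat.mul_le_mul_left
        apply Polynomial.natDegree_sum_le_of_forall_le
        intro i hi
        rw [Finset.mem_range] at hi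
        rw [Polynomial.natDegree_X_pow]
        omega
    _ < j := by rw [Nat.mul_comm]; exact h

private noncomputable def Hp (r m : ℕ) : Polynomial ℂ :=
  ∑ j ∈ Finset.range m, Polynomial.C (rnomial r (m - 1 - j) j : ℂ) * Polynomial.X ^ j

private lemma coeff_Hp (r m i : ℕ) :
    (Hp r m).coeff i = if i < m then (rnomial r (m - 1 - i) i : ℂ) else 0 := by
  unfold Hp
  rw [Polynomial.finset_sum_coeff]
  simp only [Polynomial.coeff_C_mul, Polynomial.coeff_X_pow, mul_ite, mul_one, mul_zero]
  rw [Finset.sum_ite_eq (Finset.range m) i (fun j => (rnomial r (m - 1 - j) j : ℂ))]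
  simp [Finset.mem_range]

private lemma Hp_rec (r : ℕ) (hr : 1 ≤ r) (n : ℕ) :
    ∑ k ∈ Finset.range r, Polynomial.X ^ k * Hp r (n + 1 - k) = Hp r (n + 2) := by
  ext j
  rw [Polynomial.finset_sum_coeff, coeff_Hp]
  simp only [Polynomial.coeff_X_pow_mul', coeff_Hp]
  rcases le_or_gt j n with hj | hj
  · rw [if_pos (by omega)]
    have h1 : n + 2 - 1 - j = (n - j) + 1 := by omega
    rw [h1, rnomial_rec, Nat.cast_sum]
    apply Finset.sum_congr rfl
    intro k _
    rcases le_or_gt k j with hkj | hkj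
    · rw [if_pos hkj, if_pos (show j - k < n + 1 - k by omega),
        show n + 1 - k - 1 - (j - k) = n - j from by omega, if_pos hkj]
    · rw [if_neg (by omega), if_neg (by omega)]
      simp
  · have hz : ∀ k ∈ Finset.range r,
        (if k ≤ j then (if j - k < n + 1 - k then
          (rnomial r (n + 1 - k - 1 - (j - k)) (j - k) : ℂ) else 0) else 0) = 0 := by
      intro k _
      rcases le_or_gt k j with hkj | hkj
      · rw [if_pos hkj, if_neg (by omega)]
      · rw [if_neg (by omega)]
    rw [Finset.sum_congr rfl hz, Finset.sum_const_zero]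
    rcases lt_or_ge j (n + 2) with hj2 | hj2
    · rw [if_pos hj2]
      have : j = n + 1 := by omega
      subst this
      rw [show n + 2 - 1 - (n + 1) = 0 by omega, rnomial_zero_left]
      rw [if_neg (by omega)]
      simp
    · rw [if_neg (by omega)]

private noncomputable def hh (r m : ℕ) : Polynomial ℂ :=
  ∑ j ∈ Finset.range m, Polynomial.C (rnomial r (m - 1 - j) j : ℂ) * Polynomial.X ^ (r * j)

private lemma hh_eq_aeval (r m : ℕ) :
    hh r m = Polynomial.aeval ((Polynomial.X : Polynomial ℂ) ^ r) (Hp r m) := by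
  unfold hh Hp
  rw [map_sum]
  apply Finset.sum_congr rfl
  intro j _
  rw [map_mul, map_pow, Polynomial.aeval_X, Polynomial.aeval_C, ← pow_mul]
  rfl

private lemma hh_rec (r : ℕ) (hr : 1 ≤ r) (n : ℕ) :
    ∑ k ∈ Finset.range r, Polynomial.X ^ (r * k) * hh r (n + 1 - k) = hh r (n + 2) := by
  have h := congrArg (Polynomial.aeval ((Polynomial.X : Polynomial ℂ) ^ r)) (Hp_rec r hr n)
  rw [map_sum] at h
  rw [← hh_eq_aeval] at h
  rw [← h]
  apply Finset.sum_congr rfl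
  intro k _
  rw [map_mul, map_pow, Polynomial.aeval_X, ← pow_mul, ← hh_eq_aeval]

private lemma coeff_hh (r m e : ℕ) :
    (hh r m).coeff e = ∑ j ∈ Finset.range m,
      if e = r * j then (rnomial r (m - 1 - j) j : ℂ) else 0 := by
  unfold hh
  rw [Polynomial.finset_sum_coeff]
  apply Finset.sum_congr rfl
  intro j _
  rw [Polynomial.coeff_C_mul, Polynomial.coeff_X_pow]
  simp [mul_ite]

private lemma coeff_hh_of (r m j : ℕ) (hr : 1 ≤ r) (hj : j < m) :
    (hh r m).coeff (r * j) = (rnomial r (m - 1 - j) j : ℂ) := by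
  rw [coeff_hh]
  rw [Finset.sum_eq_single j]
  · simp
  · intro b _ hb
    rw [if_neg]
    intro hc
    exact hb (Nat.eq_of_mul_eq_mul_left (by omega) hc.symm)
  · intro h
    exact absurd (Finset.mem_range.mpr hj) h

private lemma natDegree_hh (r m : ℕ) (hr : 1 ≤ r) :
    (hh r m).natDegree ≤ (r - 1) * (m - 1) := by
  rw [Polynomial.natDegree_le_iff_coeff_eq_zero]
  intro e he
  rw [coeff_hh]
  apply Finset.sum_eq_zero
  intro j hj
  rw [Finset.mem_range] at hj
  split_ifs with h
  · norm_cast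
    apply rnomial_eq_zero
    have h1 : (r - 1) * (m - 1 - j) + (r - 1) * j = (r - 1) * (m - 1) := by
      rw [← Nat.mul_add]
      congr 1
      omega
    have h2 : r * j = (r - 1) * j + j := by
      cases r with
      | zero => omega
      | succ r' => simp [Nat.succ_sub_one, Nat.succ_mul]
    omega
  · rfl

private lemma reflect_sum {N : ℕ} {s : Finset ℕ} (f : ℕ → Polynomial ℂ) :
    Polynomial.reflect N (∑ i ∈ s, f i) = ∑ i ∈ s, Polynomial.reflect N (f i) := by
  classical
  induction s using Finset.induction with
  | empty => simp
  | insert _ _ h ih => simp [Finset.sum_insert h, Polynomial.reflect_add, ih]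

private lemma RBon_eq (r : ℕ) (hr : 2 ≤ r) : ∀ m : ℕ,
    RBon r m = Polynomial.reflect ((r - 1) * (m - 1)) (hh r m) := by
  intro m
  induction m using Nat.strong_induction_on with
  | _ m ih =>
    match m with
    | 0 => simp [RBon, hh]
    | 1 =>
      rw [RBon.eq_2, show (r - 1) * (1 - 1) = 0 by omega]
      unfold hh
      rw [Finset.sum_range_one]
      rw [rnomial_zero_right r 0 (by omega)]
      simp
    | (n + 2) =>
      rw [RBon_rec]
      have step : ∀ i ∈ Finset.range r, Polynomial.X ^ i * RBon r (n + 2 - (r - i)) =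
          Polynomial.reflect ((r - 1) * (n + 1))
            (Polynomial.X ^ (r * (r - 1 - i)) * hh r (n + 2 - (r - i))) := by
        intro i hi
        rw [Finset.mem_range] at hi
        rw [ih _ (by omega)]
        rcases Nat.eq_zero_or_pos (n + 2 - (r - i)) with h0 | h0
        · rw [h0]
          unfold hh
          simp
        · have hA : (r - 1) * (n + 1) = (r * (r - 1 - i) + i) + (r - 1) * (n + 2 - (r - i) - 1) := by
            have hri : r - i ≤ n + 1 := by omega
            zify [hri, (by omega : i ≤ r - 1), (by omega : i ≤ r), (by omega : 1 ≤ r),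
              (by omega : r - i ≤ n + 2), (by omega : 1 ≤ n + 2 - (r - i))]
            push_cast [(by omega : i ≤ r)]
            ring
          rw [hA, Polynomial.reflect_mul (Polynomial.X ^ (r * (r - 1 - i))) (hh r (n + 2 - (r - i)))
            (by rw [Polynomial.natDegree_X_pow]; omega)
            (natDegree_hh r _ (by omega))]
          rw [Polynomial.reflect_monomial, Polynomial.revAt_le (by omega)]
          congr 2 <;> omega
      rw [Finset.sum_congr rfl step, ← reflect_sum]
      congr 1
      have reind : ∀ i ∈ Finset.range r,
          Polynomial.X ^ (r * (r - 1 - i)) * hh r (n + 2 - (r - i)) =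
          Polynomial.X ^ (r * (r - 1 - i)) * hh r (n + 1 - (r - 1 - i)) := by
        intro i hi
        rw [Finset.mem_range] at hi
        congr 2
        omega
      rw [Finset.sum_congr rfl reind]
      exact (Finset.sum_range_reflect
        (fun k => Polynomial.X ^ (r * k) * hh r (n + 1 - k)) r).trans
        (hh_rec r (by omega) n)

theorem stmt_11 (r n : ℕ) (hr : 2 ≤ r) (hn : 1 ≤ n) (h3 : 3 ≤ (r - 1) * n)
    (p : ℕ) (hp : p ≤ r - 1)
    (t : ℕ)
    (ht : (t : ℤ) = (r : ℤ) * ((r : ℤ) - 1) * n - 2 * r - (1 - (p : ℤ)) * ((r : ℤ) - 1))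
    (D : ℕ) (hD : D = (r - 1) * (r * n + p - 1))
    (μ : ℕ) (hμ : μ = D.descFactorial t)
    (ψ υ : ℂ)
    (hψ : ψ = -(((D - r).descFactorial t : ℂ) / (μ : ℂ)) * (rnomial r (r * n + p - 2) 1 : ℂ))
    (hυ : υ = ((t.factorial : ℂ) / (μ : ℂ)) * (rnomial r (r * n + p - 3) 2 : ℂ)) :
    ∀ x : ℂ, (Polynomial.derivative^[t] (RBon r (r * n + p))).IsRoot x →
      (x ^ r) ^ 2 - ψ * x ^ r + υ = 0 ∧
        (x ^ r = (ψ + (ψ ^ 2 - 4 * υ) ^ ((1 : ℂ) / 2)) / 2 ∨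
         x ^ r = (ψ - (ψ ^ 2 - 4 * υ) ^ ((1 : ℂ) / 2)) / 2) := by
  intro x hx
  have hm3 : 3 ≤ r * n + p := by
    have h4 : r * n = (r - 1) * n + n := by
      cases r with
      | zero => omega
      | succ r' => simp [Nat.succ_sub_one, Nat.succ_mul]
    omega
  have hDz : (D : ℤ) = ((r : ℤ) - 1) * ((r : ℤ) * n + p - 1) := by
    rw [hD]
    push_cast [(show 1 ≤ r by omega), (show 1 ≤ r * n + p by omega)]
    ring
  have hDtz : (t : ℤ) + 2 * r = D := by linear_combination ht - hDz
  have hDt : t + 2 * r = D := by exact_mod_cast hDtz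
  have hμ0 : μ ≠ 0 := by
    rw [hμ]
    intro hc
    rw [Nat.descFactorial_eq_zero_iff_lt] at hc
    omega
  have hμC : (μ : ℂ) ≠ 0 := Nat.cast_ne_zero.mpr hμ0
  have h00 := coeff_hh_of r (r * n + p) 0 (by omega) (by omega)
  rw [mul_zero] at h00
  have h01 := coeff_hh_of r (r * n + p) 1 (by omega) (by omega)
  rw [mul_one] at h01
  have h02 := coeff_hh_of r (r * n + p) 2 (by omega) (by omega)
  have hder : Polynomial.derivative^[t] (RBon r (r * n + p)) =
      Polynomial.C (μ : ℂ) * Polynomial.X ^ (2 * r)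
        + Polynomial.C (((D - r).descFactorial t * rnomial r (r * n + p - 2) 1 : ℕ) : ℂ)
            * Polynomial.X ^ r
        + Polynomial.C ((t.factorial * rnomial r (r * n + p - 3) 2 : ℕ) : ℂ) := by
    ext d
    rw [Polynomial.coeff_iterate_derivative, RBon_eq r hr, ← hD, Polynomial.coeff_reflect]
    simp only [Polynomial.coeff_add, Polynomial.coeff_C_mul, Polynomial.coeff_C,
      Polynomial.coeff_X_pow, mul_ite, mul_one, mul_zero]
    rcases eq_or_ne d (2 * r) with rfl | hd2
    · rw [Polynomial.revAt_le (by omega), show D - (2 * r + t) = 0 by omega, h00,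
        show r * n + p - 1 - 0 = r * n + p - 1 by omega,
        rnomial_zero_right r _ (by omega)]
      rw [if_pos rfl, if_neg (by omega), if_neg (by omega)]
      rw [nsmul_eq_mul]
      rw [show 2 * r + t = D by omega, ← hμ]
      simp
    · rcases eq_or_ne d r with hdreq | hdr
      · rw [hdreq]
        rw [Polynomial.revAt_le (by omega), show D - (r + t) = r by omega, h01,
          show r * n + p - 1 - 1 = r * n + p - 2 by omega]
        rw [if_neg (by omega), if_pos rfl, if_neg (by omega)]
        rw [nsmul_eq_mul]
        rw [show r + t = D - r by omega]
        push_cast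
        ring
      · rcases eq_or_ne d 0 with rfl | hd0
        · rw [Polynomial.revAt_le (by omega), show D - (0 + t) = r * 2 by omega, h02,
            show r * n + p - 1 - 2 = r * n + p - 3 by omega]
          rw [if_neg (by omega), if_neg (by omega), if_pos rfl]
          rw [nsmul_eq_mul]
          rw [show 0 + t = t by omega, Nat.descFactorial_self]
          push_cast
          ring
        · rw [if_neg (by omega), if_neg (by omega), if_neg (by omega)]
          rcases lt_or_ge d (2 * r) with hlt | hge
          · rw [Polynomial.revAt_le (by omega)]
            have hz : (hh r (r * n + p)).coeff (D - (d + t)) = 0 := by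
              rw [coeff_hh]
              apply Finset.sum_eq_zero
              intro j hj
              rw [if_neg]
              intro hc
              have hj2 : j = 0 ∨ j = 1 ∨ 2 ≤ j := by omega
              rcases hj2 with rfl | rfl | hj2
              · omega
              · omega
              · have h2r : r * 2 ≤ r * j := Nat.mul_le_mul_left r hj2
                omega
            rw [hz, smul_zero]
            simp
          · rw [Polynomial.revAt_eq_self_of_lt (by omega)]
            rw [Polynomial.coeff_eq_zero_of_natDegree_lt
              (lt_of_le_of_lt (natDegree_hh r (r * n + p) (by omega)) (by omega)), smul_zero]
            simp
  rw [Polynomial.IsRoot, hder] at hx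
  simp only [Polynomial.eval_add, Polynomial.eval_mul, Polynomial.eval_C, Polynomial.eval_pow,
    Polynomial.eval_X] at hx
  push_cast at hx
  have hxx : x ^ (2 * r) = (x ^ r) ^ 2 := by
    rw [two_mul, pow_add, sq]
  rw [hxx] at hx
  have h1 : (x ^ r) ^ 2 - ψ * x ^ r + υ = 0 := by
    rw [hψ, hυ]
    field_simp
    linear_combination hx
  refine ⟨h1, ?_⟩
  have hs2 : ((ψ ^ 2 - 4 * υ) ^ ((1 : ℂ) / 2)) ^ 2 = ψ ^ 2 - 4 * υ := by
    rw [show (1 : ℂ) / 2 = ((2 : ℕ) : ℂ)⁻¹ by norm_num]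
    exact Complex.cpow_nat_inv_pow _ (by norm_num)
  set s : ℂ := (ψ ^ 2 - 4 * υ) ^ ((1 : ℂ) / 2) with hs
  have key : (2 * x ^ r - ψ - s) * (2 * x ^ r - ψ + s) = 0 := by
    linear_combination 4 * h1 - hs2
  rcases mul_eq_zero.mp key with h | h
  · left; linear_combination h / 2
  · right; linear_combination h / 2
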